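/- arXiv:2508.13809 — 6 statements merged into one kernel-verified Lean document; each statement's English description precedes it below -/
import Mathlib

section
/- Let A_1, …, A_m and B_1, …, B_m be subsets of [n], and let L = {l_1, …, l_k} be a set of k nonnegative integers. Suppose that |A_r ∩ B_s| ∈ L for all r ≠ s, that A_r ⊆ B_r for every r, and that |A_r| ∉ L for every r, 1 ≤ r ≤ m. Then m ≤ ∑_{i=0}^{k} C(n−1, i), where C(a,b) denotes the binomial coefficient. -/
open Finset

namespace LiuAux

/-- "Monomial" functions on the cube of subsets. -/
def eT {n : ℕ} (T : Finset (Fin n)) : Finset (Fin n) → ℚ := fun S => if T ⊆ S then 1 else 0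

lemma mul_eT {n : ℕ} (A' : Finset (Fin n)) (c : ℚ) (T : Finset (Fin n)) :
    (fun S => ((A' ∩ S).card : ℚ) + c) * eT T
      = (∑ i ∈ A', eT (insert i T)) + c • eT T := by
  funext S
  simp only [Pi.mul_apply, Pi.add_apply, Pi.smul_apply, Finset.sum_apply, eT, smul_eq_mul]
  by_cases hTS : T ⊆ S
  · rw [if_pos hTS]
    have h1 : ∀ i ∈ A', (if insert i T ⊆ S then (1 : ℚ) else 0) = if i ∈ S then 1 else 0 := by
      intro i _
      by_cases hi : i ∈ S
      · rw [if_pos (insert_subset hi hTS), if_pos hi]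
      · rw [if_neg (fun h => hi (h (mem_insert_self i T))), if_neg hi]
    rw [Finset.sum_congr rfl h1, Finset.sum_boole, filter_mem_eq_inter]
    ring
  · rw [if_neg hTS]
    have h1 : ∀ i ∈ A', (if insert i T ⊆ S then (1 : ℚ) else 0) = 0 := by
      intro i _
      rw [if_neg (fun h => hTS (fun x hx => h (mem_insert_of_mem hx)))]
    rw [Finset.sum_congr rfl h1]
    simp

lemma span_lemma {n : ℕ} (A' : Finset (Fin n)) (c : ℚ) (L : Finset ℕ) :
    (fun S => ∏ l ∈ L, (((A' ∩ S).card : ℚ) + c - (l : ℚ)))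
      ∈ Submodule.span ℚ (eT '' {T : Finset (Fin n) | T ⊆ A' ∧ T.card ≤ L.card}) := by
  induction L using Finset.induction with
  | empty =>
      have h : (fun S : Finset (Fin n) => ∏ l ∈ (∅ : Finset ℕ), (((A' ∩ S).card : ℚ) + c - (l : ℚ)))
          = eT ∅ := by
        funext S; simp [eT]
      rw [h]
      exact Submodule.subset_span ⟨∅, ⟨empty_subset _, by simp⟩, rfl⟩
  | @insert a L ha ih =>
      have key : (fun S => ∏ l ∈ insert a L, (((A' ∩ S).card : ℚ) + c - (l : ℚ)))
          = (fun S => ((A' ∩ S).card : ℚ) + (c - a)) *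
            (fun S => ∏ l ∈ L, (((A' ∩ S).card : ℚ) + c - (l : ℚ))) := by
        funext S
        simp only [Pi.mul_apply, Finset.prod_insert ha]
        ring
      rw [key]
      set w : Finset (Fin n) → ℚ := fun S => ((A' ∩ S).card : ℚ) + (c - a) with hw
      have main : ∀ (x : Finset (Fin n) → ℚ),
          x ∈ Submodule.span ℚ (eT '' {T : Finset (Fin n) | T ⊆ A' ∧ T.card ≤ L.card}) →
          w * x ∈ Submodule.span ℚ
            (eT '' {T : Finset (Fin n) | T ⊆ A' ∧ T.card ≤ (insert a L).card}) := by
        intro x hx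
        induction hx using Submodule.span_induction with
        | mem x hmem =>
            obtain ⟨T, ⟨hTA, hTk⟩, rfl⟩ := hmem
            rw [hw, mul_eT]
            refine Submodule.add_mem _ (Submodule.sum_mem _ ?_) (Submodule.smul_mem _ _ ?_)
            · intro i hi
              refine Submodule.subset_span ⟨insert i T, ⟨insert_subset hi hTA, ?_⟩, rfl⟩
              calc (insert i T).card ≤ T.card + 1 := card_insert_le i T
                _ ≤ L.card + 1 := by omega
                _ = (insert a L).card := (card_insert_of_notMem ha).symm
            · refine Submodule.subset_span ⟨T, ⟨hTA, ?_⟩, rfl⟩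
              rw [card_insert_of_notMem ha]; omega
        | zero => rw [mul_zero]; exact Submodule.zero_mem _
        | add x y hx hy hx' hy' => rw [mul_add]; exact Submodule.add_mem _ hx' hy'
        | smul r x hx hx' => rw [mul_smul_comm]; exact Submodule.smul_mem _ _ hx'
      exact main _ ih

lemma erase_inter_erase {n : ℕ} (A B : Finset (Fin n)) (p : Fin n) :
    A.erase p ∩ B.erase p = (A ∩ B).erase p := by
  ext x
  simp only [mem_inter, mem_erase]
  tauto

/-- Key evaluation identity. -/
lemma eval_lemma {n : ℕ} (A B : Finset (Fin n)) (p : Fin n) (L : Finset ℕ)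
    (h : p ∈ A → p ∈ B) :
    (∏ l ∈ L, (((A.erase p ∩ B.erase p).card : ℚ) + (if p ∈ A then 1 else 0) - (l : ℚ)))
      = ∏ l ∈ L, (((A ∩ B).card : ℚ) - (l : ℚ)) := by
  have hcard : ((A.erase p ∩ B.erase p).card : ℚ) + (if p ∈ A then 1 else 0)
      = ((A ∩ B).card : ℚ) := by
    rw [erase_inter_erase]
    by_cases hp : p ∈ A
    · have hp2 : p ∈ A ∩ B := mem_inter.mpr ⟨hp, h hp⟩
      have := card_erase_add_one hp2
      rw [if_pos hp]
      push_cast [← this]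
      ring
    · have hp2 : p ∉ A ∩ B := fun hx => hp (mem_inter.mp hx).1
      rw [if_neg hp, erase_eq_of_notMem hp2, add_zero]
  rw [hcard]

end LiuAux

open LiuAux in
/-- Theorem of Liu et al. (Lemma 2.7 in liu2024snevily). -/
theorem liu_et_al (n m k : ℕ) (A B : Fin m → Finset (Fin n))
    (L : Finset ℕ) (hL : L.card = k)
    (hAB : ∀ r s, r ≠ s → (A r ∩ B s).card ∈ L)
    (hsub : ∀ r, A r ⊆ B r)
    (hnot : ∀ r, (A r).card ∉ L) :
    m ≤ ∑ i ∈ Finset.range (k + 1), (n - 1).choose i := by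
  have hRHS1 : 1 ≤ ∑ i ∈ Finset.range (k + 1), (n - 1).choose i := by
    calc 1 = (n - 1).choose 0 := by simp
      _ ≤ _ := Finset.single_le_sum (f := fun i => (n - 1).choose i)
            (fun i _ => Nat.zero_le _) (Finset.mem_range.mpr (by omega))
  match n, A, B with
  | 0, A, B =>
    -- degenerate case: m ≤ 1
    by_contra hm
    push_neg at hm
    have hm2 : 2 ≤ m := by omega
    have hne : (⟨0, by omega⟩ : Fin m) ≠ ⟨1, by omega⟩ := by
      simp [Fin.ext_iff]
    have h0 : ∀ (r : Fin m), A r = ∅ :=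
      fun r => Finset.eq_empty_of_forall_notMem (fun x => x.elim0)
    have h0' : ∀ (r : Fin m), B r = ∅ :=
      fun r => Finset.eq_empty_of_forall_notMem (fun x => x.elim0)
    have h1 := hAB ⟨0, by omega⟩ ⟨1, by omega⟩ hne
    have h2 := hnot ⟨0, by omega⟩
    rw [h0, h0'] at h1
    rw [h0] at h2
    simp at h1 h2
    exact h2 h1
  | (n' + 1), A, B =>
    set p : Fin (n' + 1) := 0 with hp
    -- the functions
    set f : Fin m → (Finset (Fin (n' + 1)) → ℚ) := fun r S =>
      ∏ l ∈ L, ((((A r).erase p ∩ S).card : ℚ) + (if p ∈ A r then 1 else 0) - (l : ℚ)) with hf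
    -- evaluation points
    set C : Fin m → Finset (Fin (n' + 1)) := fun s => (B s).erase p with hC
    have heval : ∀ r s, (p ∈ A r → p ∈ B s) →
        f r (C s) = ∏ l ∈ L, (((A r ∩ B s).card : ℚ) - (l : ℚ)) := by
      intro r s h
      exact eval_lemma (A r) (B s) p L h
    have hdiag : ∀ s, f s (C s) ≠ 0 := by
      intro s
      rw [heval s s (fun h => hsub s h)]
      rw [Finset.inter_eq_left.mpr (hsub s)]
      rw [Finset.prod_ne_zero_iff]
      intro l hl
      have : ((A s).card : ℚ) ≠ (l : ℚ) := by
        intro hcast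
        exact hnot s (by rwa [Nat.cast_inj.mp hcast])
      exact sub_ne_zero.mpr this
    have hoff : ∀ r s, r ≠ s → (p ∈ A r → p ∈ B s) → f r (C s) = 0 := by
      intro r s hrs h
      rw [heval r s h]
      exact Finset.prod_eq_zero (hAB r s hrs) (by simp)
    -- linear independence
    have hli : LinearIndependent ℚ f := by
      rw [Fintype.linearIndependent_iff]
      intro g hg
      have hgC : ∀ s, ∑ r, g r * f r (C s) = 0 := by
        intro s
        have := congrFun hg (C s)
        simpa using this
      have h1 : ∀ s, p ∈ B s → g s = 0 := by
        intro s hps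
        have h := hgC s
        rw [Finset.sum_eq_single s
          (fun r _ hrs => by rw [hoff r s hrs (fun _ => hps), mul_zero])
          (fun hs => absurd (Finset.mem_univ s) hs)] at h
        exact (mul_eq_zero.mp h).resolve_right (hdiag s)
      intro s
      by_cases hps : p ∈ B s
      · exact h1 s hps
      · have h := hgC s
        rw [Finset.sum_eq_single s
          (fun r _ hrs => by
            by_cases hpa : p ∈ A r
            · rw [h1 r (hsub r hpa), zero_mul]
            · rw [hoff r s hrs (fun h' => absurd h' hpa), mul_zero])
          (fun hs => absurd (Finset.mem_univ s) hs)] at h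
        exact (mul_eq_zero.mp h).resolve_right (hdiag s)
    -- spanning set
    set I : Finset (Finset (Fin (n' + 1))) :=
      (Finset.range (k + 1)).biUnion
        (fun i => ((Finset.univ : Finset (Fin (n' + 1))).erase p).powersetCard i) with hI
    have hIcard : I.card = ∑ i ∈ Finset.range (k + 1), (n' + 1 - 1).choose i := by
      rw [hI, Finset.card_biUnion]
      · apply Finset.sum_congr rfl
        intro i _
        rw [Finset.card_powersetCard, Finset.card_erase_of_mem (Finset.mem_univ p),
          Finset.card_fin]
      · intro x _ y _ hxy
        rw [Function.onFun, Finset.disjoint_left]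
        intro T hTx hTy
        rw [Finset.mem_powersetCard] at hTx hTy
        exact hxy (hTx.2 ▸ hTy.2.symm ▸ rfl)
    have hspan : ∀ r, f r ∈ Submodule.span ℚ ((fun T => eT T) '' (↑I : Set (Finset (Fin (n' + 1))))) := by
      intro r
      have h := span_lemma ((A r).erase p) (if p ∈ A r then (1 : ℚ) else 0) L
      refine Submodule.span_mono ?_ h
      apply Set.image_mono
      intro T hT
      obtain ⟨hTA, hTk⟩ := hT
      rw [hL] at hTk
      rw [Finset.mem_coe, hI, Finset.mem_biUnion]
      exact ⟨T.card, Finset.mem_range.mpr (by omega),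
        Finset.mem_powersetCard.mpr
          ⟨hTA.trans (Finset.erase_subset_erase p (Finset.subset_univ _)), rfl⟩⟩
    -- count
    have hcoe : ((fun T => eT T) '' (↑I : Set (Finset (Fin (n' + 1)))))
        = ↑(I.image (fun T => eT T)) := by
      rw [Finset.coe_image]
    set W := Submodule.span ℚ (↑(I.image (fun T => eT T)) :
      Set (Finset (Fin (n' + 1)) → ℚ)) with hW
    have hspanW : ∀ r, f r ∈ W := fun r => by rw [hW, ← hcoe]; exact hspan r
    set f' : Fin m → W := fun r => ⟨f r, hspanW r⟩ with hf'
    have hli' : LinearIndependent ℚ f' := by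
      apply LinearIndependent.of_comp W.subtype
      exact hli
    have hm : m ≤ Module.finrank ℚ W := by
      have := hli'.fintype_card_le_finrank
      simpa using this
    have hfin : Module.finrank ℚ W ≤ (I.image (fun T => eT T)).card :=
      finrank_span_finset_le_card _
    have : m ≤ I.card := by
      calc m ≤ Module.finrank ℚ W := hm
        _ ≤ (I.image (fun T => eT T)).card := hfin
        _ ≤ I.card := Finset.card_image_le
    rw [hIcard] at this
    simpa using this
end

section
/- Let L = {l_1, …, l_s} be a set of s nonnegative integers, and let A_1, …, A_m be pairwise distinct subsets of [n] such that |A_i ∩ A_j| ∈ L for all i ≠ j. Then m ≤ ∑_{i=0}^{s} C(n, i), where C(a,b) denotes the binomial coefficient. -/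
open Finset

/-- Monomial function: indicator that `S ⊆ B`. -/
noncomputable def fwMon {n : ℕ} (S : Finset (Fin n)) : Finset (Fin n) → ℝ :=
  fun B => if S ⊆ B then 1 else 0

lemma fw_mul_step {n : ℕ} (Aa : Finset (Fin n)) (l : ℕ) (d : ℕ)
    (h : Finset (Fin n) → ℝ)
    (hh : h ∈ Submodule.span ℝ (fwMon '' {S : Finset (Fin n) | S.card ≤ d})) :
    (fun B => (((Aa ∩ B).card : ℝ) - l) * h B) ∈
      Submodule.span ℝ (fwMon '' {S : Finset (Fin n) | S.card ≤ d + 1}) := by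
  induction hh using Submodule.span_induction with
  | mem x hx =>
      obtain ⟨S, hS, rfl⟩ := hx
      simp only [Set.mem_setOf_eq] at hS
      have key : (fun B => (((Aa ∩ B).card : ℝ) - l) * fwMon S B)
          = (∑ a ∈ Aa, fwMon (insert a S)) - (l : ℝ) • fwMon S := by
        funext B
        by_cases hSB : S ⊆ B
        · have h1 : ∀ a : Fin n, (insert a S ⊆ B) ↔ a ∈ B := by
            intro a; rw [Finset.insert_subset_iff]; simp [hSB]
          simp only [fwMon, hSB, if_true, mul_one, Finset.sum_apply, Pi.sub_apply,
            Pi.smul_apply, smul_eq_mul, mul_one, h1]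
          rw [Finset.sum_boole, Finset.filter_mem_eq_inter]
        · have h1 : ∀ a : Fin n, ¬ (insert a S ⊆ B) := by
            intro a hc
            exact hSB (Finset.Subset.trans (Finset.subset_insert a S) hc)
          simp [fwMon, hSB, h1]
      rw [key]
      apply Submodule.sub_mem
      · apply Submodule.sum_mem
        intro a _
        apply Submodule.subset_span
        exact ⟨insert a S, le_trans (Finset.card_insert_le a S) (Nat.add_le_add_right hS 1), rfl⟩
      · apply Submodule.smul_mem
        apply Submodule.subset_span
        exact ⟨S, le_trans hS (Nat.le_succ d), rfl⟩
  | zero =>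
      have h0 : (fun B => (((Aa ∩ B).card : ℝ) - l) * (0 : Finset (Fin n) → ℝ) B)
          = (0 : Finset (Fin n) → ℝ) := by
        funext B; simp
      rw [h0]; exact Submodule.zero_mem _
  | add x y hx hy ihx ihy =>
      have : (fun B => (((Aa ∩ B).card : ℝ) - l) * (x + y) B)
          = (fun B => (((Aa ∩ B).card : ℝ) - l) * x B)
            + (fun B => (((Aa ∩ B).card : ℝ) - l) * y B) := by
        funext B; simp [mul_add]
      rw [this]; exact Submodule.add_mem _ ihx ihy
  | smul c x hx ih =>
      have : (fun B => (((Aa ∩ B).card : ℝ) - l) * (c • x) B)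
          = c • fun B => (((Aa ∩ B).card : ℝ) - l) * x B := by
        funext B; simp [smul_eq_mul]; ring
      rw [this]; exact Submodule.smul_mem _ c ih

lemma fw_prod_mem_span {n : ℕ} (Aa : Finset (Fin n)) (L' : Finset ℕ) :
    (fun B => ∏ l ∈ L', (((Aa ∩ B).card : ℝ) - l)) ∈
      Submodule.span ℝ (fwMon '' {S : Finset (Fin n) | S.card ≤ L'.card}) := by
  induction L' using Finset.induction with
  | empty =>
      apply Submodule.subset_span
      refine ⟨∅, by simp, ?_⟩
      funext B; simp [fwMon]
  | @insert l L' hl ih =>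
      have heq : (fun B => ∏ x ∈ insert l L', (((Aa ∩ B).card : ℝ) - x))
          = fun B => (((Aa ∩ B).card : ℝ) - l) * ∏ x ∈ L', (((Aa ∩ B).card : ℝ) - x) := by
        funext B; rw [Finset.prod_insert hl]
      rw [heq, Finset.card_insert_of_notMem hl]
      exact fw_mul_step Aa l L'.card _ ih

/-- The Frankl–Wilson theorem. -/
theorem frankl_wilson (n m s : ℕ) (L : Finset ℕ) (hL : L.card = s)
    (A : Fin m → Finset (Fin n)) (hA : Function.Injective A)
    (hint : ∀ i j, i ≠ j → (A i ∩ A j).card ∈ L) :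
    m ≤ ∑ i ∈ Finset.range (s + 1), n.choose i := by
  classical
  -- the functions f i
  set f : Fin m → (Finset (Fin n) → ℝ) :=
    fun i B => ∏ l ∈ L.filter (· < (A i).card), (((A i ∩ B).card : ℝ) - l) with hf
  -- the generating finset
  set T : Finset (Finset (Fin n) → ℝ) :=
    ((Finset.range (s + 1)).biUnion
      (fun k => Finset.powersetCard k (Finset.univ : Finset (Fin n)))).image fwMon with hT
  -- each f i is in the span of T
  have hmem : ∀ i, f i ∈ Submodule.span ℝ (T : Set (Finset (Fin n) → ℝ)) := by
    intro i
    have h1 := fw_prod_mem_span (A i) (L.filter (· < (A i).card))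
    refine Submodule.span_mono ?_ h1
    rintro x ⟨S, hS, rfl⟩
    simp only [Set.mem_setOf_eq] at hS
    have hSs : S.card ≤ s := le_trans hS (hL ▸ Finset.card_filter_le L _)
    simp only [hT, Finset.coe_image, Set.mem_image, Finset.mem_coe, Finset.mem_biUnion]
    exact ⟨S, ⟨S.card, Finset.mem_range.mpr (by omega),
      Finset.mem_powersetCard.mpr ⟨Finset.subset_univ S, rfl⟩⟩, rfl⟩
  -- the f i are linearly independent
  have hli : LinearIndependent ℝ f := by
    rw [Fintype.linearIndependent_iff]
    intro c hc
    by_contra hco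
    push_neg at hco
    obtain ⟨i₀, hi₀⟩ := hco
    -- choose i with c i ≠ 0 and |A i| minimal
    obtain ⟨i, hiN, hmin⟩ := Finset.exists_min_image
      (Finset.univ.filter (fun j => c j ≠ 0)) (fun j => (A j).card)
      ⟨i₀, by simp [hi₀]⟩
    simp only [Finset.mem_filter, Finset.mem_univ, true_and] at hiN
    have hceval := congrFun hc (A i)
    simp only [Finset.sum_apply, Pi.smul_apply, Pi.zero_apply, smul_eq_mul] at hceval
    have hzero : ∀ j, j ≠ i → c j * f j (A i) = 0 := by
      intro j hji
      by_cases hcj : c j = 0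
      · simp [hcj]
      · have hjN : j ∈ Finset.univ.filter (fun j => c j ≠ 0) := by simp [hcj]
        have hcard : (A i).card ≤ (A j).card := hmin j hjN
        -- show f j (A i) = 0
        have ht : (A j ∩ A i).card ∈ L := hint j i hji
        have htle : (A j ∩ A i).card ≤ (A i).card :=
          Finset.card_le_card (Finset.inter_subset_right)
        have htlt : (A j ∩ A i).card < (A j).card := by
          rcases lt_or_eq_of_le (le_trans htle hcard) with h | h
          · exact h
          · exfalso
            have hsub : A j ⊆ A i := by
              have : A j ∩ A i = A j :=
                Finset.eq_of_subset_of_card_le Finset.inter_subset_left (le_of_eq h.symm)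
              rw [← this]; exact Finset.inter_subset_right
            have : A j = A i :=
              Finset.eq_of_subset_of_card_le hsub (by omega)
            exact hji (hA this)
        have hfj : f j (A i) = 0 := by
          show (∏ l ∈ L.filter (· < (A j).card), (((A j ∩ A i).card : ℝ) - l)) = 0
          exact Finset.prod_eq_zero (Finset.mem_filter.mpr ⟨ht, htlt⟩) (by simp)
        simp [hfj]
    rw [Finset.sum_eq_single i (fun j _ hji => hzero j hji) (by simp)] at hceval
    have hfii : f i (A i) ≠ 0 := by
      simp only [hf]
      apply Finset.prod_ne_zero_iff.mpr
      intro l hl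
      simp only [Finset.mem_filter] at hl
      have : (l : ℝ) < ((A i ∩ A i).card : ℝ) := by
        rw [Finset.inter_self]; exact_mod_cast hl.2
      linarith
    exact hiN (by
      rcases mul_eq_zero.mp hceval with h | h
      · exact h
      · exact absurd h hfii)
  -- dimension count
  have hTcard : T.card ≤ ∑ i ∈ Finset.range (s + 1), n.choose i := by
    calc T.card ≤ ((Finset.range (s + 1)).biUnion
          (fun k => Finset.powersetCard k (Finset.univ : Finset (Fin n)))).card :=
            Finset.card_image_le
      _ ≤ ∑ k ∈ Finset.range (s + 1),
            (Finset.powersetCard k (Finset.univ : Finset (Fin n))).card :=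
            Finset.card_biUnion_le
      _ = ∑ i ∈ Finset.range (s + 1), n.choose i := by
            apply Finset.sum_congr rfl
            intro k _
            rw [Finset.card_powersetCard, Finset.card_univ, Fintype.card_fin]
  set W := Submodule.span ℝ (T : Set (Finset (Fin n) → ℝ)) with hW
  haveI : FiniteDimensional ℝ W := FiniteDimensional.span_finset ℝ T
  have hg : LinearIndependent ℝ (fun i => (⟨f i, hmem i⟩ : W)) := by
    apply LinearIndependent.of_comp W.subtype
    convert hli
    rfl
  have h1 : m ≤ Module.finrank ℝ W := by
    simpa using hg.fintype_card_le_finrank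
  have h2 : Module.finrank ℝ W ≤ T.card := finrank_span_finset_le_card T
  omega
end

section
/- Let p be a prime not dividing n, and let L ⊆ Z/pZ satisfy 0 ∉ L and L = −L (i.e., x ∈ L iff −x ∈ L). Let A_1, …, A_m be pairwise distinct subsets of [n] such that |A_i| mod p ∈ L for every i, and |A_i ∩ A_j| ≡ 0 (mod p) for all i ≠ j. Then m ≤ ∑_{i=0}^{|L|} C(n−1, i), where C(a,b) denotes the binomial coefficient. -/
/-- Sharpened Snevily-type theorem, case p ∤ n. -/
theorem sharper_not_dvd (p : ℕ) (hp : p.Prime) (n : ℕ) (hpn : ¬ p ∣ n)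
    (L : Finset (ZMod p)) (h0 : (0 : ZMod p) ∉ L) (hsym : ∀ x : ZMod p, x ∈ L ↔ -x ∈ L)
    (m : ℕ) (A : Fin m → Finset (Fin n)) (hA : Function.Injective A)
    (hsize : ∀ i, ((A i).card : ZMod p) ∈ L)
    (hint : ∀ i j, i ≠ j → (((A i ∩ A j).card : ZMod p) = 0)) :
    m ≤ ∑ i ∈ Finset.range (L.card + 1), (n - 1).choose i := by
  have hn : 1 ≤ n := by
    rcases Nat.eq_zero_or_pos n with h | h
    · exact absurd (h ▸ dvd_zero p) hpn
    · exact h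
  rcases Finset.eq_empty_or_nonempty L with hL | hL
  · rcases Nat.eq_zero_or_pos m with h | h
    · simp [h]
    · have := hsize ⟨0, h⟩
      simp [hL] at this
  · have : Fact p.Prime := ⟨hp⟩
    set v : Fin m → (Fin n → ZMod p) := fun i x => if x ∈ A i then 1 else 0 with hv
    have hdot : ∀ i j, (∑ x, v i x * v j x) = ((A i ∩ A j).card : ZMod p) := by
      intro i j
      have h1 : ∀ x, v i x * v j x = if x ∈ A i ∩ A j then (1 : ZMod p) else 0 := by
        intro x
        by_cases hx : x ∈ A i <;> by_cases hy : x ∈ A j <;>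
          simp [hv, hx, hy, Finset.mem_inter]
      rw [Finset.sum_congr rfl fun x _ => h1 x, Finset.sum_ite_mem, Finset.univ_inter,
        Finset.sum_const, nsmul_eq_mul, mul_one]
    have hli : LinearIndependent (ZMod p) v := by
      rw [linearIndependent_iff']
      intro s g hg i hi
      have hfun : ∀ x, (∑ j ∈ s, g j * v j x) = 0 := by
        intro x
        have := congrFun hg x
        simpa [Finset.sum_apply] using this
      have h2 : ∑ j ∈ s, g j * ((A j ∩ A i).card : ZMod p) = 0 := by
        calc ∑ j ∈ s, g j * ((A j ∩ A i).card : ZMod p)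
            = ∑ j ∈ s, g j * (∑ x, v j x * v i x) := by
              simp [hdot]
          _ = ∑ x, (∑ j ∈ s, g j * v j x) * v i x := by
              simp_rw [Finset.mul_sum, Finset.sum_mul, mul_assoc]
              exact Finset.sum_comm
          _ = 0 := by simp [hfun]
      have h3 : g i * ((A i).card : ZMod p) = 0 := by
        rw [Finset.sum_eq_single i] at h2
        · simpa using h2
        · intro j hj hji
          rw [hint j i hji, mul_zero]
        · intro h; exact absurd hi h
      have hAi : ((A i).card : ZMod p) ≠ 0 := fun h => h0 (h ▸ hsize i)
      exact (mul_eq_zero.mp h3).resolve_right hAi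
    have hcard : m ≤ n := by
      have := hli.fintype_card_le_finrank
      simpa using this
    have h1L : 1 ≤ L.card := Finset.one_le_card.mpr hL
    have hsub : ({0, 1} : Finset ℕ) ⊆ Finset.range (L.card + 1) := by
      intro x hx
      simp only [Finset.mem_insert, Finset.mem_singleton] at hx
      rcases hx with rfl | rfl <;> rw [Finset.mem_range] <;> omega
    calc m ≤ n := hcard
      _ = ∑ i ∈ ({0, 1} : Finset ℕ), (n - 1).choose i := by
          rw [Finset.sum_pair (by norm_num)]
          rw [Nat.choose_zero_right, Nat.choose_one_right]
          omega
      _ ≤ ∑ i ∈ Finset.range (L.card + 1), (n - 1).choose i :=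
          Finset.sum_le_sum_of_subset_of_nonneg hsub (by intros; positivity)
end

section
/- Let n be an even positive integer, and let A_1, …, A_m be pairwise distinct subsets of [n] such that |A_i| is even for every i, and |A_i ∩ A_j| is odd for all i ≠ j. Then m ≤ n − 1. -/
open Finset

lemma even_cast_zmod2 {k : ℕ} (h : Even k) : (k : ZMod 2) = 0 := by
  obtain ⟨t, rfl⟩ := h
  push_cast
  ring_nf
  rw [show ((2:ZMod 2)) = 0 from rfl]
  ring

lemma odd_cast_zmod2 {k : ℕ} (h : Odd k) : (k : ZMod 2) = 1 := by
  obtain ⟨t, rfl⟩ := h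
  push_cast
  rw [show ((2:ZMod 2)) = 0 from rfl]
  ring

/-- Tight bound for the reverse odd-town problem when n is even. -/
theorem reverse_odd_town_even (n : ℕ) (hn : 0 < n) (heven : Even n)
    (m : ℕ) (A : Fin m → Finset (Fin n)) (hA : Function.Injective A)
    (hsize : ∀ i, Even (A i).card)
    (hint : ∀ i j, i ≠ j → Odd (A i ∩ A j).card) :
    m ≤ n - 1 := by
  by_contra hlt
  push_neg at hlt
  have hnm : n ≤ m := by omega
  set e : Fin n → Fin m := Fin.castLE hnm with he
  have hinj : Function.Injective e := Fin.castLE_injective hnm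
  set u : Fin n → (Fin n → ZMod 2) :=
    fun i k => if k ∈ A (e i) then 1 else 0 with hu
  have hdot : ∀ i j : Fin n, (∑ k, u i k * u j k)
      = ((A (e i) ∩ A (e j)).card : ZMod 2) := by
    intro i j
    have h1 : ∀ k : Fin n, u i k * u j k
        = if k ∈ A (e i) ∩ A (e j) then (1 : ZMod 2) else 0 := by
      intro k
      simp only [hu, Finset.mem_inter]
      by_cases h1 : k ∈ A (e i) <;> by_cases h2 : k ∈ A (e j) <;> simp [h1, h2]
    rw [Finset.sum_congr rfl (fun k _ => h1 k), Finset.sum_boole]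
    congr 1
    rw [Finset.filter_mem_eq_inter, Finset.univ_inter]
  have hdot' : ∀ i j : Fin n, (∑ k, u i k * u j k)
      = if i = j then 0 else 1 := by
    intro i j
    rw [hdot]
    by_cases hij : i = j
    · subst hij
      simp only [if_pos rfl, Finset.inter_self]
      exact even_cast_zmod2 (hsize (e i))
    · rw [if_neg hij]
      exact odd_cast_zmod2 (hint (e i) (e j) (fun h => hij (hinj h)))
  -- linear independence of u
  have hLI : LinearIndependent (ZMod 2) u := by
    rw [Fintype.linearIndependent_iff]
    intro c hc
    have key : ∀ j : Fin n, c j = ∑ i, c i := by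
      intro j
      have hck : ∀ k : Fin n, (∑ i, c i * u i k) = 0 := by
        intro k
        have := congrFun hc k
        simpa [Finset.sum_apply] using this
      have h1 : (∑ i, c i * (∑ k, u i k * u j k)) = 0 := by
        calc (∑ i, c i * (∑ k, u i k * u j k))
            = ∑ i, ∑ k, (c i * u i k) * u j k := by
              apply Finset.sum_congr rfl; intro i _
              rw [Finset.mul_sum]; apply Finset.sum_congr rfl; intros; ring
          _ = ∑ k, (∑ i, c i * u i k) * u j k := by
              rw [Finset.sum_comm]
              apply Finset.sum_congr rfl; intro k _
              rw [Finset.sum_mul]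
          _ = 0 := by simp [hck]
      have h2 : (∑ i, c i * (if i = j then (0 : ZMod 2) else 1)) = 0 := by
        calc (∑ i, c i * (if i = j then (0 : ZMod 2) else 1))
            = ∑ i, c i * (∑ k, u i k * u j k) :=
              Finset.sum_congr rfl (fun i _ => by rw [hdot' i j])
          _ = 0 := h1
      have h3 : (∑ i, c i * (if i = j then (0 : ZMod 2) else 1))
          = (∑ i, c i) - c j := by
        have : ∀ i : Fin n, c i * (if i = j then (0 : ZMod 2) else 1)
            = c i - (if i = j then c i else 0) := by
          intro i
          by_cases h : i = j <;> simp [h]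
        rw [Finset.sum_congr rfl (fun i _ => this i), Finset.sum_sub_distrib,
          Finset.sum_ite_eq' Finset.univ j c, if_pos (Finset.mem_univ j)]
      have := h3 ▸ h2
      have h4 : (∑ i, c i) = c j := by
        have := sub_eq_zero.mp this
        exact this
      exact h4.symm
    have hS : (∑ i, c i) = 0 := by
      have h5 : (∑ i : Fin n, c i) = ∑ i : Fin n, (∑ j, c j) :=
        Finset.sum_congr rfl (fun i _ => key i)
      rw [Finset.sum_const, Finset.card_univ, Fintype.card_fin,
        nsmul_eq_mul, even_cast_zmod2 heven, zero_mul] at h5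
      exact h5
    intro j
    rw [key j, hS]
  -- the hyperplane of vectors with coordinate sum zero
  let φ : (Fin n → ZMod 2) →ₗ[ZMod 2] ZMod 2 :=
    { toFun := fun x => ∑ k, x k
      map_add' := by intros; simp [Finset.sum_add_distrib]
      map_smul' := by intros; simp [Finset.mul_sum] }
  have humem : ∀ i, u i ∈ LinearMap.ker φ := by
    intro i
    rw [LinearMap.mem_ker]
    show (∑ k, u i k) = 0
    have : (∑ k, u i k) = ((A (e i)).card : ZMod 2) := by
      simp only [hu]
      rw [Finset.sum_boole]
      congr 1
      rw [Finset.filter_mem_eq_inter, Finset.univ_inter]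
    rw [this]
    exact even_cast_zmod2 (hsize (e i))
  let w : Fin n → LinearMap.ker φ := fun i => ⟨u i, humem i⟩
  have hw : LinearIndependent (ZMod 2) w := by
    apply LinearIndependent.of_comp (LinearMap.ker φ).subtype
    exact hLI
  have hcard : n ≤ Module.finrank (ZMod 2) (LinearMap.ker φ) := by
    simpa using hw.fintype_card_le_finrank
  have hsurj : Function.Surjective φ := by
    intro y
    obtain ⟨j⟩ := Fin.pos_iff_nonempty.mp hn
    refine ⟨Pi.single j y, ?_⟩
    show (∑ k, Pi.single j y k) = y
    simp
  have hrank : Module.finrank (ZMod 2) (LinearMap.ker φ) + 1 = n := by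
    have h1 := LinearMap.finrank_range_add_finrank_ker φ
    rw [LinearMap.range_eq_top.mpr hsurj] at h1
    simp only [finrank_top, Module.finrank_self] at h1
    rw [Module.finrank_pi, Fintype.card_fin] at h1
    omega
  omega
end

section
/- Let p be a prime dividing n, let k ≥ 2 be an integer, and let L ⊆ Z/pZ satisfy L = −L (i.e., x ∈ L iff −x ∈ L). Let A_1, …, A_m be subsets of [n] with m ≥ k such that: for every j with 1 ≤ j ≤ k−1 and all indices 1 ≤ r_1 < ⋯ < r_j ≤ m, |A_{r_1} ∩ ⋯ ∩ A_{r_j}| ≡ 0 (mod p); and for all indices 1 ≤ r_1 < ⋯ < r_k ≤ m, |A_{r_1} ∩ ⋯ ∩ A_{r_k}| mod p ∈ L. Fix i with 1 ≤ i ≤ m, and define A'_i = [n] \ A_i and A'_j = A_j for j ≠ i. Then the family A'_1, …, A'_m satisfies the same conditions: all j-wise intersections for 1 ≤ j ≤ k−1 have size ≡ 0 (mod p), and all k-wise intersections have size whose residue mod p lies in L. -/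
/-- The Complement Lemma. -/
theorem complement_lemma (p : ℕ) (hp : p.Prime) (n : ℕ) (hpn : p ∣ n)
    (k : ℕ) (hk : 2 ≤ k)
    (L : Finset (ZMod p)) (hsym : ∀ x : ZMod p, x ∈ L ↔ -x ∈ L)
    (m : ℕ) (hm : k ≤ m) (A : Fin m → Finset (Fin n))
    (hlow : ∀ j : ℕ, 1 ≤ j → j ≤ k - 1 → ∀ r : Fin j → Fin m, StrictMono r →
      ((Finset.univ.inf fun t : Fin j => A (r t)).card : ZMod p) = 0)
    (htop : ∀ r : Fin k → Fin m, StrictMono r →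
      ((Finset.univ.inf fun t : Fin k => A (r t)).card : ZMod p) ∈ L)
    (i : Fin m) (A' : Fin m → Finset (Fin n))
    (hA'i : A' i = (A i)ᶜ) (hA'j : ∀ j, j ≠ i → A' j = A j) :
    (∀ j : ℕ, 1 ≤ j → j ≤ k - 1 → ∀ r : Fin j → Fin m, StrictMono r →
      ((Finset.univ.inf fun t : Fin j => A' (r t)).card : ZMod p) = 0) ∧
    (∀ r : Fin k → Fin m, StrictMono r →
      ((Finset.univ.inf fun t : Fin k => A' (r t)).card : ZMod p) ∈ L) := by
  classical
  haveI : NeZero p := ⟨hp.ne_zero⟩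
  -- if i is not in the range of r, the intersection is unchanged
  have hsame : ∀ (j : ℕ) (r : Fin j → Fin m), (∀ t, r t ≠ i) →
      (Finset.univ.inf fun t : Fin j => A' (r t)) =
      (Finset.univ.inf fun t : Fin j => A (r t)) := by
    intro j r hr
    exact Finset.inf_congr rfl (fun t _ => hA'j _ (hr t))
  -- the key computation when i = r t0
  have key : ∀ (j : ℕ), j + 1 ≤ k → ∀ (r : Fin (j + 1) → Fin m), StrictMono r →
      ∀ t0 : Fin (j + 1), r t0 = i →
      ((Finset.univ.inf fun t : Fin (j + 1) => A' (r t)).card : ZMod p) =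
      - ((Finset.univ.inf fun t : Fin (j + 1) => A (r t)).card : ZMod p) := by
    intro j hj r hr t0 ht0
    set S : Finset (Fin n) := (Finset.univ.erase t0).inf (fun t => A (r t)) with hS
    have huniv : (Finset.univ : Finset (Fin (j + 1))) =
        insert t0 (Finset.univ.erase t0) :=
      (Finset.insert_erase (Finset.mem_univ t0)).symm
    have herase : ((Finset.univ.erase t0).inf fun t => A' (r t)) = S := by
      refine Finset.inf_congr rfl (fun t ht => ?_)
      have : r t ≠ i := by
        intro h
        exact (Finset.mem_erase.mp ht).1 (hr.injective (h.trans ht0.symm))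
      exact hA'j _ this
    have h1 : (Finset.univ.inf fun t : Fin (j + 1) => A' (r t)) = S \ A i := by
      rw [huniv, Finset.inf_insert, herase, ht0, hA'i, inf_comm, ← sdiff_eq]
    have h2 : (Finset.univ.inf fun t : Fin (j + 1) => A (r t)) = S ∩ A i := by
      rw [huniv, Finset.inf_insert, ht0, inf_comm]
      rfl
    -- S has cardinality ≡ 0 mod p
    have hS0 : ((S.card : ZMod p)) = 0 := by
      rcases Nat.eq_zero_or_pos j with hj0 | hj0
      · subst hj0
        have : (Finset.univ.erase t0 : Finset (Fin 1)) = ∅ := by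
          apply Finset.eq_empty_of_forall_notMem
          intro t ht
          exact (Finset.mem_erase.mp ht).1 (Subsingleton.elim t t0)
        rw [hS, this, Finset.inf_empty]
        have : (⊤ : Finset (Fin n)).card = n := by
          simp [Finset.top_eq_univ]
        rw [this]
        exact (ZMod.natCast_eq_zero_iff n p).mpr hpn
      · have hErase : (Finset.univ.erase t0) = Finset.univ.image t0.succAbove := by
          rw [Fin.image_succAbove_univ, Finset.compl_singleton]
        have hSeq : S = Finset.univ.inf fun t : Fin j => A (r (t0.succAbove t)) := by
          rw [hS, hErase, Finset.inf_image]
          rfl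
        rw [hSeq]
        exact hlow j hj0 (by omega) _ (hr.comp (Fin.strictMono_succAbove t0))
    have hcard : (S \ A i).card + (S ∩ A i).card = S.card :=
      Finset.card_sdiff_add_card_inter S (A i)
    have : ((S \ A i).card : ZMod p) + ((S ∩ A i).card : ZMod p) = (S.card : ZMod p) := by
      exact_mod_cast congrArg (Nat.cast : ℕ → ZMod p) hcard
    rw [h1, h2]
    rw [hS0] at this
    linear_combination this
  constructor
  · intro j hj1 hjk r hr
    by_cases hi : ∃ t0, r t0 = i
    · obtain ⟨t0, ht0⟩ := hi
      obtain ⟨j', rfl⟩ : ∃ j', j = j' + 1 := ⟨j - 1, by omega⟩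
      rw [key j' (by omega) r hr t0 ht0, hlow _ hj1 hjk r hr, neg_zero]
    · push_neg at hi
      rw [hsame j r hi]
      exact hlow j hj1 hjk r hr
  · intro r hr
    by_cases hi : ∃ t0, r t0 = i
    · obtain ⟨t0, ht0⟩ := hi
      obtain ⟨k', rfl⟩ : ∃ k', k = k' + 1 := ⟨k - 1, by omega⟩
      rw [key k' le_rfl r hr t0 ht0]
      exact (hsym _).mp (htop r hr)
    · push_neg at hi
      rw [hsame k r hi]
      exact htop r hr
end

section
/- Let p be a prime, k ≥ 2 an integer, and let L_1, …, L_k be subsets of Z/pZ such that L_t ∩ L_{t+1} = ∅ for some integer t with 1 < t ≤ k−1. Let A_1, …, A_m be pairwise distinct subsets of [n] with m ≥ k such that for every j with 1 ≤ j ≤ k and all indices 1 ≤ r_1 < ⋯ < r_j ≤ m, |A_{r_1} ∩ ⋯ ∩ A_{r_j}| mod p ∈ L_j. Fix γ with 1 ≤ γ ≤ m. Then: (a) the map i ↦ A_i ∩ A_γ is injective on {1,…,m} \ {γ} (so the family {A_i ∩ A_γ : i ≠ γ} has exactly m−1 members); and (b) for every j with 1 ≤ j ≤ k−1 and all indices i_1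 < ⋯ < i_j in {1,…,m} \ {γ}, |(A_{i_1} ∩ A_γ) ∩ ⋯ ∩ (A_{i_j} ∩ A_γ)| mod p ∈ L_{j+1}. -/
/-- The Trace Lemma. -/
theorem trace_lemma (p : ℕ) (hp : p.Prime) (n : ℕ) (k : ℕ) (hk : 2 ≤ k)
    (L : ℕ → Finset (ZMod p)) (t : ℕ) (ht1 : 1 < t) (htk : t ≤ k - 1)
    (hdisj : Disjoint (L t) (L (t + 1)))
    (m : ℕ) (hm : k ≤ m) (A : Fin m → Finset (Fin n)) (hA : Function.Injective A)
    (hint : ∀ j : ℕ, 1 ≤ j → j ≤ k → ∀ r : Fin j → Fin m, StrictMono r →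
      ((Finset.univ.inf fun s : Fin j => A (r s)).card : ZMod p) ∈ L j)
    (γ : Fin m) :
    (∀ i j : Fin m, i ≠ γ → j ≠ γ → A i ∩ A γ = A j ∩ A γ → i = j) ∧
    (∀ j : ℕ, 1 ≤ j → j ≤ k - 1 → ∀ r : Fin j → Fin m, StrictMono r →
      (∀ s : Fin j, r s ≠ γ) →
      ((Finset.univ.inf fun s : Fin j => A (r s) ∩ A γ).card : ZMod p) ∈ L (j + 1)) := by
  -- key: for any nonempty S of size ≤ k, the inf over S lands in L S.card
  have key : ∀ S : Finset (Fin m), S.Nonempty → S.card ≤ k →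
      ((S.inf A).card : ZMod p) ∈ L S.card := by
    intro S hS hSk
    have h1 : 1 ≤ S.card := hS.card_pos
    have hmem := hint S.card h1 hSk (fun s => S.orderEmbOfFin rfl s)
      (S.orderEmbOfFin rfl).strictMono
    have himg : Finset.image (fun s => S.orderEmbOfFin rfl s) Finset.univ = S := by
      apply Finset.coe_injective
      rw [Finset.coe_image, Finset.coe_univ, Set.image_univ]
      exact Finset.range_orderEmbOfFin S rfl
    have heq2 : S.inf A = (Finset.image (fun s => S.orderEmbOfFin rfl s) Finset.univ).inf A := by
      rw [himg]
    rw [Finset.inf_image] at heq2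
    rw [heq2]
    exact hmem
  constructor
  · intro i j hiγ hjγ heq
    by_contra hij
    have hij' : i ≠ j := hij
    -- pick t - 2 extra indices
    have hcardC : ({i, j, γ} : Finset (Fin m)).card = 3 := by
      rw [Finset.card_insert_of_notMem (by simp [hij', hiγ]),
        Finset.card_insert_of_notMem (by simp [hjγ])]
      simp
    have hm' : t + 1 ≤ m := by omega
    obtain ⟨D, hD, hDcard⟩ := Finset.exists_subset_card_eq
      (s := Finset.univ \ ({i, j, γ} : Finset (Fin m))) (n := t - 2)
      (by rw [Finset.card_sdiff_of_subset (Finset.subset_univ _), hcardC, Finset.card_univ,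
        Fintype.card_fin]; omega)
    have hiD : i ∉ D := fun h => by simpa using (hD h)
    have hjD : j ∉ D := fun h => by simpa using (hD h)
    have hγD : γ ∉ D := fun h => by simpa using (hD h)
    set T' : Finset (Fin m) := insert i (insert γ D) with hT'
    have hjT' : j ∉ T' := by simp [hT', hij'.symm, hjγ, hjD]
    have hT'card : T'.card = t := by
      rw [hT', Finset.card_insert_of_notMem (by simp [hiγ, hiD]),
        Finset.card_insert_of_notMem hγD, hDcard]; omega
    have hTcard : (insert j T').card = t + 1 := by
      rw [Finset.card_insert_of_notMem hjT', hT'card]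
    -- B := T'.inf A
    have hBi : T'.inf A ⊆ A i := Finset.inf_le (by simp [hT'])
    have hBγ : T'.inf A ⊆ A γ := Finset.inf_le (by simp [hT'])
    have hBj : T'.inf A ⊆ A j := by
      intro x hx
      have : x ∈ A i ∩ A γ := Finset.mem_inter.2 ⟨hBi hx, hBγ hx⟩
      rw [heq] at this
      exact (Finset.mem_inter.1 this).1
    have hTinf : (insert j T').inf A = T'.inf A := by
      rw [Finset.inf_insert]
      exact inf_eq_right.2 hBj
    have h1 := key T' ⟨i, by simp [hT']⟩ (by omega)
    have h2 := key (insert j T') ⟨j, by simp⟩ (by rw [hTcard]; omega)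
    rw [hT'card] at h1
    rw [hTcard, hTinf] at h2
    exact Finset.disjoint_left.1 hdisj h1 h2
  · intro j hj1 hjk r hr hrγ
    have hne : Nonempty (Fin j) := ⟨⟨0, by omega⟩⟩
    have hγimg : γ ∉ Finset.image r Finset.univ := by
      simp only [Finset.mem_image]
      rintro ⟨s, -, hs⟩
      exact hrγ s hs
    set S : Finset (Fin m) := insert γ (Finset.image r Finset.univ) with hS
    have hScard : S.card = j + 1 := by
      rw [hS, Finset.card_insert_of_notMem hγimg,
        Finset.card_image_of_injective _ hr.injective, Finset.card_univ,
        Fintype.card_fin]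
    have hinf : (Finset.univ.inf fun s : Fin j => A (r s) ∩ A γ) = S.inf A := by
      ext x
      simp only [Finset.mem_inf, hS, Finset.mem_insert, Finset.mem_image,
        Finset.mem_univ, true_implies, Finset.mem_inter]
      constructor
      · rintro h b (rfl | ⟨s, -, rfl⟩)
        · exact (h (Classical.arbitrary _)).2
        · exact (h s).1
      · intro h s
        exact ⟨h (r s) (Or.inr ⟨s, trivial, rfl⟩), h γ (Or.inl rfl)⟩
    rw [hinf]
    have := key S ⟨γ, by simp [hS]⟩ (by rw [hScard]; omega)
    rwa [hScard] at this
end
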